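/- Let r ∈ (0,1), k₀ = √(1−r²)/r, and α the standard circle solution α(t) = √(1−r²)w + r cos(2πt)v₁ + r sin(2πt)v₀. Let V = λ₁ α̇ + λ₂ (α × α̇) be a tangent vector field along α with λ₁, λ₂ : ℝ/ℤ → ℝ twice differentiable. Then V solves the linearized equation 0 = −D_t²V − |α̇|²V + ⟨V,α̇⟩α̇ + |α̇|⁻¹⟨D_tV,α̇⟩ k₀ (α×α̇) + |α̇| k₀ (α × D_tV) if and only if λ₁'' = 2π√(1−r²) λ₂' and λ₂'' + 4π² λ₂ = 0. -/

import Mathlib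

open Real MeasureTheory Filter

noncomputable def dot3 (u v : Fin 3 → ℝ) : ℝ := ∑ i, u i * v i

noncomputable def norm3 (u : Fin 3 → ℝ) : ℝ := Real.sqrt (dot3 u u)

noncomputable def cross3 (u v : Fin 3 → ℝ) : Fin 3 → ℝ :=
  ![u 1 * v 2 - u 2 * v 1, u 2 * v 0 - u 0 * v 2, u 0 * v 1 - u 1 * v 0]

/-- Projection onto the orthogonal complement of `x`. -/
noncomputable def proj3 (x v : Fin 3 → ℝ) : Fin 3 → ℝ := v - dot3 v x • x

/-- Covariant derivative of a tangent field `V` along a sphere-valued curve `γ`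
(tangential projection of the ambient derivative). -/
noncomputable def covDeriv (γ V : ℝ → Fin 3 → ℝ) : ℝ → Fin 3 → ℝ :=
  fun t => proj3 (γ t) (deriv V t)

lemma dot3_def (u v : Fin 3 → ℝ) : dot3 u v = u 0 * v 0 + u 1 * v 1 + u 2 * v 2 := by
  simp [dot3, Fin.sum_univ_three]

lemma cross3_triple (a b c : Fin 3 → ℝ) :
    cross3 (cross3 a b) c = dot3 a c • b - dot3 b c • a := by
  funext i; fin_cases i <;>
    simp [cross3, dot3_def, Pi.sub_apply, Pi.smul_apply, smul_eq_mul] <;> ring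

lemma cross3_add_left (u v x : Fin 3 → ℝ) : cross3 (u + v) x = cross3 u x + cross3 v x := by
  funext i; fin_cases i <;> simp [cross3] <;> ring

lemma cross3_smul_left (a : ℝ) (u x : Fin 3 → ℝ) : cross3 (a • u) x = a • cross3 u x := by
  funext i; fin_cases i <;> simp [cross3] <;> ring

lemma cross3_add_right (u v x : Fin 3 → ℝ) : cross3 x (u + v) = cross3 x u + cross3 x v := by
  funext i; fin_cases i <;> simp [cross3] <;> ring

lemma cross3_smul_right (a : ℝ) (u x : Fin 3 → ℝ) : cross3 x (a • u) = a • cross3 x u := by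
  funext i; fin_cases i <;> simp [cross3] <;> ring

lemma cross3_anticomm (u v : Fin 3 → ℝ) : cross3 u v = -cross3 v u := by
  funext i; fin_cases i <;> simp [cross3] <;> ring

lemma cross3_self (u : Fin 3 → ℝ) : cross3 u u = 0 := by
  funext i; fin_cases i <;> simp [cross3] <;> ring

lemma dot3_comm (u v : Fin 3 → ℝ) : dot3 u v = dot3 v u := by
  simp [dot3_def]; ring

lemma dot3_add_left (u v x : Fin 3 → ℝ) : dot3 (u + v) x = dot3 u x + dot3 v x := by
  simp [dot3_def]; ring

lemma dot3_smul_left (a : ℝ) (u x : Fin 3 → ℝ) : dot3 (a • u) x = a * dot3 u x := by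
  simp [dot3_def]; ring

lemma dot3_add_right (u v x : Fin 3 → ℝ) : dot3 x (u + v) = dot3 x u + dot3 x v := by
  simp [dot3_def]; ring

lemma dot3_smul_right (a : ℝ) (u x : Fin 3 → ℝ) : dot3 x (a • u) = a * dot3 x u := by
  simp [dot3_def]; ring

lemma dot3_zero_left (x : Fin 3 → ℝ) : dot3 0 x = 0 := by
  simp [dot3_def]

theorem stmt14 (r : ℝ) (hr : 0 < r) (hr1 : r < 1)
    (v₀ v₁ w : Fin 3 → ℝ)
    (h00 : dot3 v₀ v₀ = 1) (h11 : dot3 v₁ v₁ = 1) (hww : dot3 w w = 1)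
    (h01 : dot3 v₀ v₁ = 0) (h0w : dot3 v₀ w = 0) (h1w : dot3 v₁ w = 0)
    (horient : cross3 v₁ v₀ = w)
    (l₁ l₂ : ℝ → ℝ) (hl₁ : ContDiff ℝ 2 l₁) (hl₂ : ContDiff ℝ 2 l₂) :
    let k₀ : ℝ := Real.sqrt (1 - r ^ 2) / r
    let α : ℝ → Fin 3 → ℝ := fun t =>
      Real.sqrt (1 - r ^ 2) • w + (r * Real.cos (2 * π * t)) • v₁
        + (r * Real.sin (2 * π * t)) • v₀
    let V : ℝ → Fin 3 → ℝ := fun t =>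
      l₁ t • deriv α t + l₂ t • cross3 (α t) (deriv α t)
    (∀ t, (0 : Fin 3 → ℝ)
        = -(covDeriv α (covDeriv α V) t)
          - (norm3 (deriv α t)) ^ 2 • V t
          + dot3 (V t) (deriv α t) • deriv α t
          + ((norm3 (deriv α t))⁻¹ * dot3 (covDeriv α V t) (deriv α t) * k₀)
              • cross3 (α t) (deriv α t)
          + (norm3 (deriv α t) * k₀) • cross3 (α t) (covDeriv α V t)) ↔
    ((∀ t, deriv (deriv l₁) t = 2 * π * Real.sqrt (1 - r ^ 2) * deriv l₂ t) ∧
     (∀ t, deriv (deriv l₂) t + 4 * π ^ 2 * l₂ t = 0)) := by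
  intro k₀ α V
  have hk₀ : k₀ = Real.sqrt (1 - r ^ 2) / r := rfl
  have hαdef : α = fun t =>
      Real.sqrt (1 - r ^ 2) • w + (r * Real.cos (2 * π * t)) • v₁
        + (r * Real.sin (2 * π * t)) • v₀ := rfl
  have hVdef0 : ∀ t, V t = l₁ t • deriv α t + l₂ t • cross3 (α t) (deriv α t) := fun _ => rfl
  clear_value k₀ α V
  set s : ℝ := Real.sqrt (1 - r ^ 2) with hsdef
  clear_value s
  have hs0 : (0:ℝ) ≤ 1 - r ^ 2 := by nlinarith
  have hs2 : s ^ 2 = 1 - r ^ 2 := by rw [hsdef]; exact Real.sq_sqrt hs0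
  have hπ : (0:ℝ) < π := Real.pi_pos
  have hne : (2 * π * r) ≠ 0 := by positivity
  -- dot table
  have h10 : dot3 v₁ v₀ = 0 := by rw [dot3_comm]; exact h01
  have hw0 : dot3 w v₀ = 0 := by rw [dot3_comm]; exact h0w
  have hw1 : dot3 w v₁ = 0 := by rw [dot3_comm]; exact h1w
  -- cross table
  have hc01 : cross3 v₀ v₁ = -w := by rw [cross3_anticomm, horient]
  have hcw1 : cross3 w v₁ = v₀ := by
    rw [← horient, cross3_triple, h11, h01]; simp
  have hc1w : cross3 v₁ w = -v₀ := by rw [cross3_anticomm, hcw1]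
  have hc0w : cross3 v₀ w = v₁ := by
    rw [← horient, cross3_anticomm, cross3_triple, h10, h00]; simp
  have hcw0 : cross3 w v₀ = -v₁ := by rw [cross3_anticomm, hc0w]
  -- frame
  set T : ℝ → Fin 3 → ℝ := fun t => (-Real.sin (2 * π * t)) • v₁ + Real.cos (2 * π * t) • v₀
    with hTdef
  set N : ℝ → Fin 3 → ℝ := fun t =>
      r • w + (-(s * Real.cos (2 * π * t))) • v₁ + (-(s * Real.sin (2 * π * t))) • v₀
    with hNdef
  clear_value T N
  -- dot lemmas for the frame
  have dTT : ∀ t, dot3 (T t) (T t) = 1 := by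
    intro t
    simp only [hTdef, dot3_add_left, dot3_add_right, dot3_smul_left, dot3_smul_right,
      h00, h11, h01, h10]
    linear_combination Real.sin_sq_add_cos_sq (2 * π * t)
  have dNT : ∀ t, dot3 (N t) (T t) = 0 := by
    intro t
    simp only [hTdef, hNdef, dot3_add_left, dot3_add_right, dot3_smul_left, dot3_smul_right,
      h00, h11, h01, h10, hw0, hw1, h0w, h1w, hww]
    ring
  have dNN : ∀ t, dot3 (N t) (N t) = 1 := by
    intro t
    simp only [hNdef, dot3_add_left, dot3_add_right, dot3_smul_left, dot3_smul_right,
      h00, h11, h01, h10, hw0, hw1, h0w, h1w, hww]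
    linear_combination s ^ 2 * Real.sin_sq_add_cos_sq (2 * π * t) + hs2
  have dTα : ∀ t, dot3 (T t) (α t) = 0 := by
    intro t
    simp only [hTdef, hαdef, dot3_add_left, dot3_add_right, dot3_smul_left, dot3_smul_right,
      h00, h11, h01, h10, hw0, hw1, h0w, h1w, hww]
    ring
  have dNα : ∀ t, dot3 (N t) (α t) = 0 := by
    intro t
    simp only [hNdef, hαdef, dot3_add_left, dot3_add_right, dot3_smul_left, dot3_smul_right,
      h00, h11, h01, h10, hw0, hw1, h0w, h1w, hww]
    linear_combination (-(r * s)) * Real.sin_sq_add_cos_sq (2 * π * t)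
  have dαα : ∀ t, dot3 (α t) (α t) = 1 := by
    intro t
    simp only [hαdef, dot3_add_left, dot3_add_right, dot3_smul_left, dot3_smul_right,
      h00, h11, h01, h10, hw0, hw1, h0w, h1w, hww]
    linear_combination r ^ 2 * Real.sin_sq_add_cos_sq (2 * π * t) + hs2
  -- cross lemmas for the frame
  have hcαT : ∀ t, cross3 (α t) (T t) = N t := by
    intro t
    simp only [hαdef, hTdef, hNdef, cross3_add_left, cross3_add_right, cross3_smul_left,
      cross3_smul_right, cross3_self, horient, hc01, hcw1, hc1w, hc0w, hcw0, smul_zero]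
    match_scalars <;>
      first
        | ring1
        | linear_combination r * Real.sin_sq_add_cos_sq (2 * π * t)
        | linear_combination (-r) * Real.sin_sq_add_cos_sq (2 * π * t)
  have hcαN : ∀ t, cross3 (α t) (N t) = -T t := by
    intro t
    simp only [hαdef, hTdef, hNdef, cross3_add_left, cross3_add_right, cross3_smul_left,
      cross3_smul_right, cross3_self, horient, hc01, hcw1, hc1w, hc0w, hcw0, smul_zero]
    match_scalars <;>
      first
      | ring1
      | linear_combination (Real.sin (2 * π * t)) * hs2
      | linear_combination (-(Real.sin (2 * π * t))) * hs2
      | linear_combination (Real.cos (2 * π * t)) * hs2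
      | linear_combination (-(Real.cos (2 * π * t))) * hs2
      | linear_combination (2 * π * Real.sin (2 * π * t)) * hs2
      | linear_combination (-(2 * π * Real.sin (2 * π * t))) * hs2
      | linear_combination (2 * π * Real.cos (2 * π * t)) * hs2
      | linear_combination (-(2 * π * Real.cos (2 * π * t))) * hs2
      | linear_combination r * Real.sin_sq_add_cos_sq (2 * π * t)
      | linear_combination (-r) * Real.sin_sq_add_cos_sq (2 * π * t)
      | linear_combination (-(8 * π ^ 3 * r * l₂ t)) * hs2
      | linear_combination (8 * π ^ 3 * r * l₂ t) * hs2
  -- derivatives of scalar pieces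
  have hcos2 : ∀ u : ℝ, HasDerivAt (fun t : ℝ => Real.cos (2 * π * t))
      (-(2 * π * Real.sin (2 * π * u))) u := fun u => by
    have h1 : HasDerivAt (fun t : ℝ => 2 * π * t) (2 * π) u := by
      simpa using (hasDerivAt_id u).const_mul (2 * π)
    have h2 := (Real.hasDerivAt_cos (2 * π * u)).comp u h1
    simpa [Function.comp_def, mul_comm] using h2
  have hsin2 : ∀ u : ℝ, HasDerivAt (fun t : ℝ => Real.sin (2 * π * t))
      (2 * π * Real.cos (2 * π * u)) u := fun u => by
    have h1 : HasDerivAt (fun t : ℝ => 2 * π * t) (2 * π) u := by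
      simpa using (hasDerivAt_id u).const_mul (2 * π)
    have h2 := (Real.hasDerivAt_sin (2 * π * u)).comp u h1
    simpa [Function.comp_def, mul_comm] using h2
  -- derivative of α
  have hαT : ∀ t, HasDerivAt α ((2 * π * r) • T t) t := by
    intro t
    rw [hαdef]
    have h := ((hasDerivAt_const t (s • w)).add
        (((hcos2 t).const_mul r).smul_const v₁)).add
        (((hsin2 t).const_mul r).smul_const v₀)
    refine h.congr_deriv ?_
    simp only [hTdef]
    module
  have hderivα : ∀ t, deriv α t = (2 * π * r) • T t := fun t => (hαT t).deriv
  -- derivatives of T and N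
  have hTd : ∀ t, HasDerivAt T ((2 * π * s) • N t + (-(2 * π * r)) • α t) t := by
    intro t
    rw [hTdef]
    have h := (((hsin2 t).neg).smul_const v₁).add ((hcos2 t).smul_const v₀)
    refine h.congr_deriv ?_
    simp only [hNdef, hαdef]
    match_scalars <;>
      first
      | ring1
      | linear_combination (Real.sin (2 * π * t)) * hs2
      | linear_combination (-(Real.sin (2 * π * t))) * hs2
      | linear_combination (Real.cos (2 * π * t)) * hs2
      | linear_combination (-(Real.cos (2 * π * t))) * hs2
      | linear_combination (2 * π * Real.sin (2 * π * t)) * hs2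
      | linear_combination (-(2 * π * Real.sin (2 * π * t))) * hs2
      | linear_combination (2 * π * Real.cos (2 * π * t)) * hs2
      | linear_combination (-(2 * π * Real.cos (2 * π * t))) * hs2
      | linear_combination r * Real.sin_sq_add_cos_sq (2 * π * t)
      | linear_combination (-r) * Real.sin_sq_add_cos_sq (2 * π * t)
      | linear_combination (-(8 * π ^ 3 * r * l₂ t)) * hs2
      | linear_combination (8 * π ^ 3 * r * l₂ t) * hs2
  have hNd : ∀ t, HasDerivAt N ((-(2 * π * s)) • T t) t := by
    intro t
    rw [hNdef]
    have h := ((hasDerivAt_const t (r • w)).add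
        ((((hcos2 t).const_mul s).neg).smul_const v₁)).add
        ((((hsin2 t).const_mul s).neg).smul_const v₀)
    refine h.congr_deriv ?_
    simp only [hTdef]
    module
  -- differentiability of the coefficients
  have hl₁d : ∀ t, HasDerivAt l₁ (deriv l₁ t) t := fun t =>
    ((hl₁.differentiable (by norm_num)) t).hasDerivAt
  have hl₂d : ∀ t, HasDerivAt l₂ (deriv l₂ t) t := fun t =>
    ((hl₂.differentiable (by norm_num)) t).hasDerivAt
  have hl₁dd : ∀ t, HasDerivAt (deriv l₁) (deriv (deriv l₁) t) t := by
    intro t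
    have h2 : ContDiff ℝ (1 + 1) l₁ := hl₁
    exact (((contDiff_succ_iff_deriv.mp h2).2.2.differentiable (by norm_num)) t).hasDerivAt
  have hl₂dd : ∀ t, HasDerivAt (deriv l₂) (deriv (deriv l₂) t) t := by
    intro t
    have h2 : ContDiff ℝ (1 + 1) l₂ := hl₂
    exact (((contDiff_succ_iff_deriv.mp h2).2.2.differentiable (by norm_num)) t).hasDerivAt
  -- V in the frame
  set A : ℝ → ℝ := fun t => deriv l₁ t - 2 * π * s * l₂ t with hAdef
  set B : ℝ → ℝ := fun t => deriv l₂ t + 2 * π * s * l₁ t with hBdef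
  clear_value A B
  have hcross1 : ∀ t, cross3 (α t) (deriv α t) = (2 * π * r) • N t := by
    intro t
    rw [hderivα t, cross3_smul_right, hcαT t]
  have hVdef : ∀ t, V t = (2 * π * r) • (l₁ t • T t + l₂ t • N t) := by
    intro t
    rw [hVdef0 t, hcross1 t, hderivα t]
    module
  have hVfun : V = fun t => (2 * π * r) • (l₁ t • T t + l₂ t • N t) := funext hVdef
  -- first covariant derivative
  have hVd : ∀ t, HasDerivAt V
      ((2 * π * r) • (A t • T t + B t • N t) + (-(2 * π * r * (2 * π * r) * l₁ t)) • α t) t := by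
    intro t
    rw [hVfun]
    have h1 : HasDerivAt (fun t => l₁ t • T t + l₂ t • N t)
        ((l₁ t • ((2 * π * s) • N t + (-(2 * π * r)) • α t) + deriv l₁ t • T t)
          + (l₂ t • ((-(2 * π * s)) • T t) + deriv l₂ t • N t)) t :=
      ((hl₁d t).smul (hTd t)).add ((hl₂d t).smul (hNd t))
    have h2 := h1.const_smul (2 * π * r)
    refine h2.congr_deriv ?_
    simp only [hAdef, hBdef]
    match_scalars <;> ring
  have hDV : ∀ t, covDeriv α V t = (2 * π * r) • (A t • T t + B t • N t) := by
    intro t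
    show proj3 (α t) (deriv V t) = _
    rw [(hVd t).deriv]
    simp only [proj3]
    have hdot : dot3 ((2 * π * r) • (A t • T t + B t • N t)
        + (-(2 * π * r * (2 * π * r) * l₁ t)) • α t) (α t)
        = -(2 * π * r * (2 * π * r) * l₁ t) := by
      simp only [dot3_add_left, dot3_smul_left, dTα t, dNα t, dαα t]
      ring
    rw [hdot]
    module
  have hDVfun : covDeriv α V = fun t => (2 * π * r) • (A t • T t + B t • N t) := funext hDV
  -- second covariant derivative
  have hAd : ∀ t, HasDerivAt A (deriv (deriv l₁) t - 2 * π * s * deriv l₂ t) t := by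
    intro t
    rw [hAdef]
    exact (hl₁dd t).sub ((hl₂d t).const_mul (2 * π * s))
  have hBd : ∀ t, HasDerivAt B (deriv (deriv l₂) t + 2 * π * s * deriv l₁ t) t := by
    intro t
    rw [hBdef]
    exact (hl₂dd t).add ((hl₁d t).const_mul (2 * π * s))
  have hDVd : ∀ t, HasDerivAt (covDeriv α V)
      ((2 * π * r) • (((deriv (deriv l₁) t - 2 * π * s * deriv l₂ t) - 2 * π * s * B t) • T t
          + ((deriv (deriv l₂) t + 2 * π * s * deriv l₁ t) + 2 * π * s * A t) • N t)
        + (-(2 * π * r * (2 * π * r) * A t)) • α t) t := by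
    intro t
    rw [hDVfun]
    have h1 : HasDerivAt (fun t => A t • T t + B t • N t)
        ((A t • ((2 * π * s) • N t + (-(2 * π * r)) • α t)
            + (deriv (deriv l₁) t - 2 * π * s * deriv l₂ t) • T t)
          + (B t • ((-(2 * π * s)) • T t)
            + (deriv (deriv l₂) t + 2 * π * s * deriv l₁ t) • N t)) t :=
      ((hAd t).smul (hTd t)).add ((hBd t).smul (hNd t))
    have h2 := h1.const_smul (2 * π * r)
    refine h2.congr_deriv ?_
    match_scalars <;> ring
  have hDDV : ∀ t, covDeriv α (covDeriv α V) t
      = (2 * π * r) • (((deriv (deriv l₁) t - 2 * π * s * deriv l₂ t) - 2 * π * s * B t) • T t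
          + ((deriv (deriv l₂) t + 2 * π * s * deriv l₁ t) + 2 * π * s * A t) • N t) := by
    intro t
    show proj3 (α t) (deriv (covDeriv α V) t) = _
    rw [(hDVd t).deriv]
    simp only [proj3]
    have hdot : dot3 ((2 * π * r) • (((deriv (deriv l₁) t - 2 * π * s * deriv l₂ t)
            - 2 * π * s * B t) • T t
          + ((deriv (deriv l₂) t + 2 * π * s * deriv l₁ t) + 2 * π * s * A t) • N t)
        + (-(2 * π * r * (2 * π * r) * A t)) • α t) (α t)
        = -(2 * π * r * (2 * π * r) * A t) := by
      simp only [dot3_add_left, dot3_smul_left, dTα t, dNα t, dαα t]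
      ring
    rw [hdot]
    module
  -- scalar quantities
  have hnorm : ∀ t, norm3 (deriv α t) = 2 * π * r := by
    intro t
    rw [hderivα t]
    show Real.sqrt (dot3 _ _) = _
    rw [dot3_smul_left, dot3_smul_right, dTT t]
    rw [show (2 * π * r) * ((2 * π * r) * 1) = (2 * π * r) ^ 2 by ring]
    exact Real.sqrt_sq (by positivity)
  have hdotV : ∀ t, dot3 (V t) (deriv α t) = (2 * π * r) ^ 2 * l₁ t := by
    intro t
    rw [hVdef t, hderivα t]
    simp only [dot3_smul_left, dot3_smul_right, dot3_add_left, dTT t, dNT t]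
    ring
  have hdotDV : ∀ t, dot3 (covDeriv α V t) (deriv α t) = (2 * π * r) ^ 2 * A t := by
    intro t
    rw [hDV t, hderivα t]
    simp only [dot3_smul_left, dot3_smul_right, dot3_add_left, dTT t, dNT t]
    ring
  have hcross2 : ∀ t, cross3 (α t) (covDeriv α V t)
      = (2 * π * r) • (A t • N t + (-(B t)) • T t) := by
    intro t
    rw [hDV t, cross3_smul_right, cross3_add_right, cross3_smul_right, cross3_smul_right,
      hcαT t, hcαN t]
    module
  have hsc1 : ∀ t, (norm3 (deriv α t))⁻¹ * dot3 (covDeriv α V t) (deriv α t) * k₀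
      = 2 * π * s * A t := by
    intro t
    rw [hnorm t, hdotDV t, hk₀]
    field_simp
  have hsc2 : ∀ t, norm3 (deriv α t) * k₀ = 2 * π * s := by
    intro t
    rw [hnorm t, hk₀]
    field_simp
  -- the key identity
  have key : ∀ t,
      (-(covDeriv α (covDeriv α V) t)
          - (norm3 (deriv α t)) ^ 2 • V t
          + dot3 (V t) (deriv α t) • deriv α t
          + ((norm3 (deriv α t))⁻¹ * dot3 (covDeriv α V t) (deriv α t) * k₀)
              • cross3 (α t) (deriv α t)
          + (norm3 (deriv α t) * k₀) • cross3 (α t) (covDeriv α V t))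
      = (-(2 * π * r) * (deriv (deriv l₁) t - 2 * π * s * deriv l₂ t)) • T t
        + (-(2 * π * r) * (deriv (deriv l₂) t + 4 * π ^ 2 * l₂ t)) • N t := by
    intro t
    rw [hDDV t, hdotV t, hsc1 t, hsc2 t, hcross1 t, hcross2 t, hnorm t, hVdef t, hderivα t]
    simp only [hAdef, hBdef]
    match_scalars <;>
      first
      | ring1
      | linear_combination (Real.sin (2 * π * t)) * hs2
      | linear_combination (-(Real.sin (2 * π * t))) * hs2
      | linear_combination (Real.cos (2 * π * t)) * hs2
      | linear_combination (-(Real.cos (2 * π * t))) * hs2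
      | linear_combination (2 * π * Real.sin (2 * π * t)) * hs2
      | linear_combination (-(2 * π * Real.sin (2 * π * t))) * hs2
      | linear_combination (2 * π * Real.cos (2 * π * t)) * hs2
      | linear_combination (-(2 * π * Real.cos (2 * π * t))) * hs2
      | linear_combination r * Real.sin_sq_add_cos_sq (2 * π * t)
      | linear_combination (-r) * Real.sin_sq_add_cos_sq (2 * π * t)
      | linear_combination (-(8 * π ^ 3 * r * l₂ t)) * hs2
      | linear_combination (8 * π ^ 3 * r * l₂ t) * hs2
  -- linear independence extraction
  have extract : ∀ (p q : ℝ) (t : ℝ),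
      (0 : Fin 3 → ℝ) = p • T t + q • N t → p = 0 ∧ q = 0 := by
    intro p q t h
    constructor
    · have h1 := congrArg (fun x => dot3 x (T t)) h
      have h2 : (0:ℝ) = p := by
        simpa [dot3_zero_left, dot3_add_left, dot3_smul_left, dTT t, dNT t] using h1
      exact h2.symm
    · have h1 := congrArg (fun x => dot3 x (N t)) h
      have hTN : dot3 (T t) (N t) = 0 := by rw [dot3_comm]; exact dNT t
      have h2 : (0:ℝ) = q := by
        simpa [dot3_zero_left, dot3_add_left, dot3_smul_left, dNN t, hTN] using h1
      exact h2.symm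
  constructor
  · intro h
    constructor
    · intro t
      obtain ⟨hP, _⟩ := extract _ _ t ((h t).trans (key t))
      have h2 : deriv (deriv l₁) t - 2 * π * s * deriv l₂ t = 0 := by
        rcases mul_eq_zero.mp hP with h' | h'
        · exact absurd (neg_eq_zero.mp h') hne
        · exact h'
      linarith [h2]
    · intro t
      obtain ⟨_, hQ⟩ := extract _ _ t ((h t).trans (key t))
      rcases mul_eq_zero.mp hQ with h' | h'
      · exact absurd (neg_eq_zero.mp h') hne
      · exact h'
  · rintro ⟨h1, h2⟩ t
    rw [key t, h1 t, h2 t]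
    match_scalars <;> ring
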